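/- Let c: ℝ → ℝ, k > 0, and let e, f: ℝ → ℝ be differentiable with e > 0, f > 0, e'(x) = e(x)·x/((c(x) − x)(x + 1)) and f'(x) = f(x)/(c(x) − x) wherever c(x) ≠ x and x ≠ −1. For ρ > 0 set π = p/ρ, r(ρ,p) = ρ/e(π) and s(ρ,p) = k ln(f(π)/ρ). Then at any (ρ,p) with ρ > 0, c(π) ≠ π, c(π) ≠ 0, π ≠ −1: I := (1/∂_ρ s)[r − 2(ρ+p) ∂_ρ r] = ρ² [(2π + 1) c(π) − π] / (k c(π) e(π)). Consequently, if moreover c(π) > 0 and 2π + 1 > 0, then I > 0 if and only if c(π) > π/(2π + 1), and I < 0 if and only if c(π) < π/(2π + 1). -/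

import Mathlib

theorem stmt_15 (c e f : ℝ → ℝ) (k : ℝ) (hk : 0 < k)
    (he : Differentiable ℝ e) (hf : Differentiable ℝ f)
    (hepos : ∀ x, 0 < e x) (hfpos : ∀ x, 0 < f x)
    (he' : ∀ x, c x ≠ x → x ≠ -1 → deriv e x = e x * x / ((c x - x) * (x + 1)))
    (hf' : ∀ x, c x ≠ x → x ≠ -1 → deriv f x = f x / (c x - x))
    (ρ p : ℝ) (hρ : 0 < ρ) (hc : c (p / ρ) ≠ p / ρ) (hc0 : c (p / ρ) ≠ 0)
    (hπ : p / ρ ≠ -1) :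
    (1 / fderiv ℝ (fun q : ℝ × ℝ => k * Real.log (f (q.2 / q.1) / q.1)) (ρ, p) (1, 0)) *
        (ρ / e (p / ρ) -
          2 * (ρ + p) * fderiv ℝ (fun q : ℝ × ℝ => q.1 / e (q.2 / q.1)) (ρ, p) (1, 0)) =
      ρ ^ 2 * ((2 * (p / ρ) + 1) * c (p / ρ) - p / ρ) / (k * c (p / ρ) * e (p / ρ)) ∧
    (0 < c (p / ρ) → 0 < 2 * (p / ρ) + 1 →
      ((0 < (1 / fderiv ℝ (fun q : ℝ × ℝ => k * Real.log (f (q.2 / q.1) / q.1)) (ρ, p) (1, 0)) *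
            (ρ / e (p / ρ) -
              2 * (ρ + p) * fderiv ℝ (fun q : ℝ × ℝ => q.1 / e (q.2 / q.1)) (ρ, p) (1, 0)) ↔
          p / ρ / (2 * (p / ρ) + 1) < c (p / ρ)) ∧
        ((1 / fderiv ℝ (fun q : ℝ × ℝ => k * Real.log (f (q.2 / q.1) / q.1)) (ρ, p) (1, 0)) *
            (ρ / e (p / ρ) -
              2 * (ρ + p) * fderiv ℝ (fun q : ℝ × ℝ => q.1 / e (q.2 / q.1)) (ρ, p) (1, 0)) < 0 ↔
          c (p / ρ) < p / ρ / (2 * (p / ρ) + 1)))) := by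
  have hρ0 : ρ ≠ 0 := hρ.ne'
  obtain ⟨π, hπd⟩ : ∃ x : ℝ, p / ρ = x := ⟨_, rfl⟩
  have hp : p = ρ * π := by rw [← hπd]; field_simp
  rw [hπd] at hc hc0 hπ ⊢
  subst hp
  have harg : ρ * π / ρ = π := by field_simp
  have hcπ : c π - π ≠ 0 := sub_ne_zero.mpr hc
  have hπ1 : π + 1 ≠ 0 := fun h => hπ (by linarith)
  have heπ : e π ≠ 0 := (hepos π).ne'
  have hfπ : f π ≠ 0 := (hfpos π).ne'
  have hk0 : k ≠ 0 := hk.ne'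
  -- one-variable derivatives
  have hu : HasDerivAt (fun x : ℝ => ρ * π / x) (ρ * π * -(ρ ^ 2)⁻¹) ρ := by
    simpa [div_eq_mul_inv] using (hasDerivAt_inv hρ0).const_mul (ρ * π)
  have hfd : HasDerivAt f (deriv f π) (ρ * π / ρ) := by rw [harg]; exact (hf π).hasDerivAt
  have hed : HasDerivAt e (deriv e π) (ρ * π / ρ) := by rw [harg]; exact (he π).hasDerivAt
  have hfc : HasDerivAt (fun x : ℝ => f (ρ * π / x)) (deriv f π * (ρ * π * -(ρ ^ 2)⁻¹)) ρ :=
    hfd.comp ρ hu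
  have hec : HasDerivAt (fun x : ℝ => e (ρ * π / x)) (deriv e π * (ρ * π * -(ρ ^ 2)⁻¹)) ρ :=
    hed.comp ρ hu
  have hfρ : f (ρ * π / ρ) = f π := by rw [harg]
  have heρ : e (ρ * π / ρ) = e π := by rw [harg]
  have hdivS : HasDerivAt (fun x : ℝ => f (ρ * π / x) / x)
      ((deriv f π * (ρ * π * -(ρ ^ 2)⁻¹) * ρ - f π * 1) / ρ ^ 2) ρ := by
    have := hfc.div (hasDerivAt_id ρ) hρ0
    rwa [hfρ] at this
  have hS : HasDerivAt (fun x : ℝ => k * Real.log (f (ρ * π / x) / x))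
      (k * ((deriv f π * (ρ * π * -(ρ ^ 2)⁻¹) * ρ - f π * 1) / ρ ^ 2 / (f π / ρ))) ρ := by
    have := (hdivS.log (by rw [hfρ]; exact div_ne_zero hfπ hρ0)).const_mul k
    rwa [hfρ] at this
  have hR : HasDerivAt (fun x : ℝ => x / e (ρ * π / x))
      ((1 * e π - ρ * (deriv e π * (ρ * π * -(ρ ^ 2)⁻¹))) / e π ^ 2) ρ := by
    have := (hasDerivAt_id ρ).div hec (by rw [heρ]; exact heπ)
    rwa [heρ] at this
  have hA : deriv (fun x : ℝ => k * Real.log (f (ρ * π / x) / x)) ρ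
      = -(k * c π) / (ρ * (c π - π)) := by
    rw [hS.deriv, hf' π hc hπ]
    field_simp
    ring
  have hB : deriv (fun x : ℝ => x / e (ρ * π / x)) ρ
      = (c π * π + c π - π) / (e π * ((c π - π) * (π + 1))) := by
    rw [hR.deriv, he' π hc hπ]
    field_simp
    ring
  -- fderiv to deriv
  have hkey : ∀ F : ℝ × ℝ → ℝ, DifferentiableAt ℝ F (ρ, ρ * π) →
      fderiv ℝ F (ρ, ρ * π) (1, 0) = deriv (fun x : ℝ => F (x, ρ * π)) ρ := by
    intro F hF
    have hg : HasDerivAt (fun x : ℝ => ((x, ρ * π) : ℝ × ℝ)) (1, 0) ρ :=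
      (hasDerivAt_id ρ).prodMk (hasDerivAt_const ρ (ρ * π))
    exact (hF.hasFDerivAt.comp_hasDerivAt ρ hg).deriv.symm
  have h1 : DifferentiableAt ℝ (fun q : ℝ × ℝ => q.1) (ρ, ρ * π) := differentiableAt_fst
  have h2 : DifferentiableAt ℝ (fun q : ℝ × ℝ => q.2) (ρ, ρ * π) := differentiableAt_snd
  have hq : DifferentiableAt ℝ (fun q : ℝ × ℝ => q.2 / q.1) (ρ, ρ * π) := by
    simp only [div_eq_mul_inv]
    exact h2.mul (h1.inv hρ0)
  have hDF : DifferentiableAt ℝ (fun q : ℝ × ℝ => k * Real.log (f (q.2 / q.1) / q.1))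
      (ρ, ρ * π) := by
    have hF1 : DifferentiableAt ℝ (fun q : ℝ × ℝ => f (q.2 / q.1)) (ρ, ρ * π) := by
      exact ((hf ((ρ, ρ * π).2 / (ρ, ρ * π).1)).comp (ρ, ρ * π) hq : _)
    have hF2 : DifferentiableAt ℝ (fun q : ℝ × ℝ => f (q.2 / q.1) / q.1) (ρ, ρ * π) := by
      simp only [div_eq_mul_inv]
      exact hF1.mul (h1.inv hρ0)
    exact (hF2.log (by show f (ρ * π / ρ) / ρ ≠ 0; rw [harg]; exact div_ne_zero hfπ hρ0)).const_mul k
  have hDE : DifferentiableAt ℝ (fun q : ℝ × ℝ => q.1 / e (q.2 / q.1)) (ρ, ρ * π) := by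
    have hE1 : DifferentiableAt ℝ (fun q : ℝ × ℝ => e (q.2 / q.1)) (ρ, ρ * π) := by
      exact ((he ((ρ, ρ * π).2 / (ρ, ρ * π).1)).comp (ρ, ρ * π) hq : _)
    simp only [div_eq_mul_inv]
    exact h1.mul (hE1.inv (show e (ρ * π / ρ) ≠ 0 by rw [harg]; exact heπ))
  have hAs : fderiv ℝ (fun q : ℝ × ℝ => k * Real.log (f (q.2 / q.1) / q.1)) (ρ, ρ * π) (1, 0)
      = -(k * c π) / (ρ * (c π - π)) := (hkey _ hDF).trans hA
  have hBs : fderiv ℝ (fun q : ℝ × ℝ => q.1 / e (q.2 / q.1)) (ρ, ρ * π) (1, 0)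
      = (c π * π + c π - π) / (e π * ((c π - π) * (π + 1))) := (hkey _ hDE).trans hB
  have hI : (1 / fderiv ℝ (fun q : ℝ × ℝ => k * Real.log (f (q.2 / q.1) / q.1)) (ρ, ρ * π) (1, 0)) *
        (ρ / e π -
          2 * (ρ + ρ * π) * fderiv ℝ (fun q : ℝ × ℝ => q.1 / e (q.2 / q.1)) (ρ, ρ * π) (1, 0))
      = ρ ^ 2 * ((2 * π + 1) * c π - π) / (k * c π * e π) := by
    rw [hAs, hBs]
    field_simp
    ring
  refine ⟨hI, fun hcp h2p => ?_⟩
  rw [hI]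
  have hd : 0 < k * c π * e π := by
    have := hepos π
    positivity
  have hρ2 : (0 : ℝ) < ρ ^ 2 := by positivity
  constructor
  · rw [lt_div_iff₀ hd, div_lt_iff₀ h2p]
    constructor <;> intro h <;> nlinarith
  · rw [div_lt_iff₀ hd, lt_div_iff₀ h2p]
    constructor <;> intro h <;> nlinarith
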